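/- Let X be a Banach space and U an evolution operator on X. Then U is weakly exponentially unstable if and only if there exists a nondecreasing function f : ℝ₊ → (0,∞) with lim_{t→∞} f(t) = +∞ such that for each x₀ ∈ X there exists t₀ ≥ 0 with ‖U(t,t₀)x₀‖ ≥ f(t−s)‖U(s,t₀)x₀‖ for all t ≥ s ≥ t₀. -/

import Mathlib

/-- An evolution operator on a Banach space `X`. -/
structure EvolutionOperator (X : Type*) [NormedAddCommGroup X] [NormedSpace ℝ X] where
  U : ℝ → ℝ → X →L[ℝ] X
  isId : ∀ t : ℝ, 0 ≤ t → U t t = ContinuousLinearMap.id ℝ X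
  cocycle : ∀ t s t₀ : ℝ, 0 ≤ t₀ → t₀ ≤ s → s ≤ t → ∀ x : X, U t s (U s t₀ x) = U t t₀ x
  cont : ∀ x : X, ContinuousOn (fun p : ℝ × ℝ => U p.1 p.2 x)
    {p : ℝ × ℝ | 0 ≤ p.2 ∧ p.2 ≤ p.1}

/-- `U` is weakly exponentially unstable. -/
def WeakExpUnstable {X : Type*} [NormedAddCommGroup X] [NormedSpace ℝ X]
    (E : EvolutionOperator X) : Prop :=
  ∃ N : ℝ, 1 ≤ N ∧ ∃ ν : ℝ, 0 < ν ∧ ∀ x₀ : X, ∃ t₀ : ℝ, 0 ≤ t₀ ∧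
    ∀ s t : ℝ, t₀ ≤ s → s ≤ t →
      N * ‖E.U t t₀ x₀‖ ≥ Real.exp (ν * (t - s)) * ‖E.U s t₀ x₀‖

/-- `U` is weakly exponentially unstable iff there is a nondecreasing
`f : ℝ₊ → (0,∞)` with `f(t) → ∞` such that for each `x₀` there is `t₀ ≥ 0` with
`‖U(t,t₀)x₀‖ ≥ f(t-s) ‖U(s,t₀)x₀‖` for all `t ≥ s ≥ t₀`. -/
theorem weakExpUnstable_iff_function
    {X : Type*} [NormedAddCommGroup X] [NormedSpace ℝ X] [CompleteSpace X]
    (E : EvolutionOperator X) :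
    WeakExpUnstable E ↔
      ∃ f : ℝ → ℝ, MonotoneOn f (Set.Ici 0) ∧ (∀ t ∈ Set.Ici (0 : ℝ), 0 < f t) ∧
        Filter.Tendsto f Filter.atTop Filter.atTop ∧
        ∀ x₀ : X, ∃ t₀ : ℝ, 0 ≤ t₀ ∧ ∀ s t : ℝ, t₀ ≤ s → s ≤ t →
          ‖E.U t t₀ x₀‖ ≥ f (t - s) * ‖E.U s t₀ x₀‖ := by
  constructor
  · rintro ⟨N, hN, ν, hν, h⟩
    have hN0 : (0 : ℝ) < N := lt_of_lt_of_le one_pos hN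
    refine ⟨fun t => Real.exp (ν * t) / N, ?_, ?_, ?_, ?_⟩
    · intro a _ b _ hab
      have : Real.exp (ν * a) ≤ Real.exp (ν * b) :=
        Real.exp_le_exp.2 (by nlinarith)
      exact div_le_div_of_nonneg_right this hN0.le
    · intro t _
      positivity
    · apply Filter.Tendsto.atTop_div_const hN0
      exact Real.tendsto_exp_atTop.comp (Filter.Tendsto.const_mul_atTop hν Filter.tendsto_id)
    · intro x₀
      obtain ⟨t₀, ht₀, hx⟩ := h x₀
      refine ⟨t₀, ht₀, fun s t hs hst => ?_⟩
      have := hx s t hs hst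
      rw [ge_iff_le, div_mul_eq_mul_div, div_le_iff₀ hN0]
      nlinarith [norm_nonneg (E.U t t₀ x₀)]
  · rintro ⟨f, hmono, hpos, htend, h⟩
    have hf0 : 0 < f 0 := hpos 0 Set.self_mem_Ici
    obtain ⟨a, ha⟩ := (Filter.tendsto_atTop.1 htend 2).exists_forall_of_atTop
    set δ : ℝ := max a 1 with hδdef
    have hδ : (0 : ℝ) < δ := lt_of_lt_of_le one_pos (le_max_right a 1)
    set c : ℝ := f δ with hcdef
    have hc : 2 ≤ c := ha δ (le_max_left a 1)
    have hc0 : (0 : ℝ) < c := by linarith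
    set ν : ℝ := Real.log c / δ with hνdef
    have hlogc : 0 < Real.log c := Real.log_pos (by linarith)
    have hν : 0 < ν := div_pos hlogc hδ
    have hνδ : ν * δ = Real.log c := div_mul_cancel₀ _ (ne_of_gt hδ)
    set N : ℝ := max 1 (Real.exp (ν * δ) / f 0) with hNdef
    have hN1 : (1 : ℝ) ≤ N := le_max_left _ _
    refine ⟨N, hN1, ν, hν, fun x₀ => ?_⟩
    obtain ⟨t₀, ht₀, hx⟩ := h x₀
    refine ⟨t₀, ht₀, fun s t hs hst => ?_⟩
    -- iteration lemma
    have key : ∀ n : ℕ, ∀ u : ℝ, t₀ ≤ u →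
        c ^ n * ‖E.U u t₀ x₀‖ ≤ ‖E.U (u + n * δ) t₀ x₀‖ := by
      intro n
      induction n with
      | zero => intro u hu; simp
      | succ n ih =>
        intro u hu
        have h1 := ih u hu
        have h2 := hx (u + n * δ) (u + (n + 1 : ℕ) * δ)
          (by push_cast; nlinarith) (by push_cast; nlinarith)
        have heq : (u + ((n : ℝ) + 1) * δ) - (u + (n : ℝ) * δ) = δ := by ring
        push_cast at h2 ⊢
        rw [heq] at h2
        have hcn : (0 : ℝ) < c ^ n := pow_pos hc0 n
        have hnorm : 0 ≤ ‖E.U (u + (n : ℝ) * δ) t₀ x₀‖ := norm_nonneg _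
        calc c ^ (n + 1) * ‖E.U u t₀ x₀‖ = c * (c ^ n * ‖E.U u t₀ x₀‖) := by ring
          _ ≤ c * ‖E.U (u + (n : ℝ) * δ) t₀ x₀‖ := by
              exact mul_le_mul_of_nonneg_left h1 (le_of_lt hc0)
          _ ≤ ‖E.U (u + ((n : ℝ) + 1) * δ) t₀ x₀‖ := h2
    set n : ℕ := ⌊(t - s) / δ⌋₊ with hndef
    have hts : 0 ≤ t - s := by linarith
    have hn1 : (n : ℝ) * δ ≤ t - s := by
      rw [← le_div_iff₀ hδ]
      exact Nat.floor_le (div_nonneg hts (le_of_lt hδ))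
    have hn2 : t - s < ((n : ℝ) + 1) * δ := by
      rw [← div_lt_iff₀ hδ]
      exact_mod_cast Nat.lt_floor_add_one ((t - s) / δ)
    have hkey := key n s hs
    have hstep := hx (s + n * δ) t (by nlinarith) (by nlinarith)
    have hf0le : f 0 ≤ f (t - (s + n * δ)) := by
      apply hmono (Set.self_mem_Ici) (by simp only [Set.mem_Ici]; nlinarith) (by nlinarith)
    have hcn : c ^ n = Real.exp (ν * ((n : ℝ) * δ)) := by
      have : ν * ((n : ℝ) * δ) = (n : ℝ) * Real.log c := by
        rw [← hνδ]; ring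
      rw [this, Real.exp_nat_mul, Real.exp_log hc0]
    have e1 : Real.exp (ν * (t - s)) ≤ Real.exp (ν * δ) * c ^ n := by
      rw [hcn, ← Real.exp_add]
      apply Real.exp_le_exp.2
      nlinarith
    have e2 : Real.exp (ν * δ) ≤ N * f 0 := by
      have h' : Real.exp (ν * δ) / f 0 ≤ N := le_max_right _ _
      rw [div_le_iff₀ hf0] at h'
      linarith
    have hcnpos : (0 : ℝ) < c ^ n := pow_pos hc0 n
    have hNpos : (0 : ℝ) < N := lt_of_lt_of_le one_pos hN1
    have hnorms : (0 : ℝ) ≤ ‖E.U s t₀ x₀‖ := norm_nonneg _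
    have hnormm : (0 : ℝ) ≤ ‖E.U (s + (n : ℝ) * δ) t₀ x₀‖ := norm_nonneg _
    have e3 : Real.exp (ν * (t - s)) ≤ N * f 0 * c ^ n := by nlinarith [Real.exp_pos (ν * δ)]
    calc Real.exp (ν * (t - s)) * ‖E.U s t₀ x₀‖
        ≤ (N * f 0 * c ^ n) * ‖E.U s t₀ x₀‖ := mul_le_mul_of_nonneg_right e3 hnorms
      _ = N * (f 0 * (c ^ n * ‖E.U s t₀ x₀‖)) := by ring
      _ ≤ N * (f 0 * ‖E.U (s + (n : ℝ) * δ) t₀ x₀‖) := by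
          apply mul_le_mul_of_nonneg_left _ (le_of_lt hNpos)
          exact mul_le_mul_of_nonneg_left hkey (le_of_lt hf0)
      _ ≤ N * (f (t - (s + n * δ)) * ‖E.U (s + (n : ℝ) * δ) t₀ x₀‖) := by
          apply mul_le_mul_of_nonneg_left _ (le_of_lt hNpos)
          exact mul_le_mul_of_nonneg_right hf0le hnormm
      _ ≤ N * ‖E.U t t₀ x₀‖ := mul_le_mul_of_nonneg_left hstep (le_of_lt hNpos)
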